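/- If v_1 ≠ v_n and s* is the largest integer with Δ(s*) ≥ 0 (where Δ is the increment of maximal coalition gains), then 2 ≤ s* ≤ ⌊n/2 + 1⌋; moreover if s** is the largest integer with δ(s**) ≥ 0 (per-capita increments) then 2 ≤ s** ≤ s* and s** ≤ ⌈√n⌉. -/

import Mathlib

open Finset

/-- The gain game: worth of a coalition `S` among `n` agents with valuations `v`. -/
noncomputable def vg (n : ℕ) (v : ℕ → ℝ) (S : Finset ℕ) : ℝ :=
  if h : S.Nonempty then
    ((n : ℝ) - S.card) / (n : ℝ) ^ 2 * ∑ i ∈ S, (S.sup' h v - v i)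
  else 0

/-- The maximal-gain coalition of cardinality `s`: `S_s = {1} ∪ {n+2-s, …, n}`
(which equals `{1}` for `s = 1`). -/
def Ss (n s : ℕ) : Finset ℕ := insert 1 (Finset.Icc (n + 2 - s) n)

/-- The increment of maximal coalition gains. -/
noncomputable def Delta (n : ℕ) (v : ℕ → ℝ) (s : ℕ) : ℝ :=
  vg n v (Ss n s) - vg n v (Ss n (s - 1))

/-- The per-capita increment of maximal coalition gains. -/
noncomputable def delta (n : ℕ) (v : ℕ → ℝ) (s : ℕ) : ℝ :=
  vg n v (Ss n s) / s - vg n v (Ss n (s - 1)) / ((s : ℝ) - 1)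

noncomputable def Aa (n : ℕ) (v : ℕ → ℝ) (s : ℕ) : ℝ :=
  ∑ i ∈ Icc (n + 2 - s) n, (v 1 - v i)

lemma Aa_nonneg {n : ℕ} {v : ℕ → ℝ} (hv : ∀ i j, i ≤ j → v j ≤ v i)
    {s : ℕ} (hs : s ≤ n) : 0 ≤ Aa n v s := by
  apply Finset.sum_nonneg
  intro i hi
  rw [mem_Icc] at hi
  have h1 : 1 ≤ i := by omega
  linarith [hv 1 i h1]

lemma Aa_one (n : ℕ) (v : ℕ → ℝ) : Aa n v 1 = 0 := by
  rw [Aa, Finset.Icc_eq_empty (by omega)]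
  simp

lemma vg_Ss {n : ℕ} {v : ℕ → ℝ} (hv : ∀ i j, i ≤ j → v j ≤ v i)
    {s : ℕ} (hs1 : 1 ≤ s) (hsn : s ≤ n) :
    vg n v (Ss n s) = ((n:ℝ) - s) / (n:ℝ)^2 * Aa n v s := by
  have h1 : (1:ℕ) ∉ Icc (n+2-s) n := by rw [mem_Icc]; omega
  have hne : (Ss n s).Nonempty := ⟨1, mem_insert_self _ _⟩
  have hsup : (Ss n s).sup' hne v = v 1 := by
    apply le_antisymm
    · apply Finset.sup'_le
      intro i hi
      rw [Ss, mem_insert, mem_Icc] at hi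
      exact hv 1 i (by omega)
    · exact Finset.le_sup' v (mem_insert_self _ _)
  have hcard : (Ss n s).card = s := by
    rw [Ss, card_insert_of_notMem h1, Nat.card_Icc]; omega
  rw [vg, dif_pos hne, hsup, hcard]
  congr 1
  rw [Ss, sum_insert h1, sub_self, zero_add, Aa]

lemma Aa_succ {n : ℕ} (v : ℕ → ℝ) {s : ℕ} (hs : 2 ≤ s) (hsn : s ≤ n) :
    Aa n v s = Aa n v (s-1) + (v 1 - v (n+2-s)) := by
  have hins : Icc (n+2-s) n = insert (n+2-s) (Icc (n+2-(s-1)) n) := by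
    ext x
    rw [mem_insert, mem_Icc, mem_Icc]
    omega
  have hnm : (n+2-s) ∉ Icc (n+2-(s-1)) n := by rw [mem_Icc]; omega
  rw [Aa, hins, sum_insert hnm, Aa, add_comm]

lemma Aa_lower {n : ℕ} {v : ℕ → ℝ} (hv : ∀ i j, i ≤ j → v j ≤ v i)
    {s : ℕ} (hs : 2 ≤ s) (hsn : s ≤ n) :
    ((s:ℝ) - 2) * (v 1 - v (n+2-s)) ≤ Aa n v (s-1) := by
  have hle : ∀ i ∈ Icc (n+2-(s-1)) n, v 1 - v (n+2-s) ≤ v 1 - v i := by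
    intro i hi
    rw [mem_Icc] at hi
    linarith [hv (n+2-s) i (by omega)]
  have h := Finset.card_nsmul_le_sum (Icc (n+2-(s-1)) n) (fun i => v 1 - v i)
      (v 1 - v (n+2-s)) hle
  rw [Nat.card_Icc, nsmul_eq_mul] at h
  have hc : ((n + 1 - (n+2-(s-1)) : ℕ) : ℝ) = (s:ℝ) - 2 := by
    have h2 : n + 1 - (n+2-(s-1)) = s - 2 := by omega
    rw [h2]
    push_cast [Nat.cast_sub hs]
    ring
  rw [hc] at h
  exact h

lemma Aa_ge_vn {n : ℕ} {v : ℕ → ℝ} (hv : ∀ i j, i ≤ j → v j ≤ v i)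
    {s : ℕ} (hs : 3 ≤ s) (hsn : s ≤ n) :
    v 1 - v n ≤ Aa n v (s-1) := by
  have hmem : n ∈ Icc (n+2-(s-1)) n := by rw [mem_Icc]; omega
  exact Finset.single_le_sum (f := fun i => v 1 - v i)
    (fun i hi => by
      rw [mem_Icc] at hi
      have h1 : 1 ≤ i := by omega
      show (0:ℝ) ≤ v 1 - v i
      linarith [hv 1 i h1]) hmem

set_option maxHeartbeats 1600000 in
theorem bounds_on_maximal_coalitions (n : ℕ) (hn : 2 ≤ n) (v : ℕ → ℝ)
    (hv : ∀ i j, i ≤ j → v j ≤ v i) (hne : v 1 ≠ v n)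
    (sstar : ℕ) (hs2 : sstar ≤ n) (hs3 : 0 ≤ Delta n v sstar)
    (hs4 : ∀ s : ℕ, 2 ≤ s → s ≤ n → 0 ≤ Delta n v s → s ≤ sstar)
    (tstar : ℕ) (ht2 : tstar ≤ n) (ht3 : 0 ≤ delta n v tstar)
    (ht4 : ∀ s : ℕ, 2 ≤ s → s ≤ n → 0 ≤ delta n v s → s ≤ tstar) :
    2 ≤ sstar ∧ sstar ≤ n / 2 + 1 ∧ 2 ≤ tstar ∧ tstar ≤ sstar ∧ tstar ≤ ⌈Real.sqrt n⌉₊ := by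
  have hvn1 : v n ≤ v 1 := hv 1 n (by omega)
  have hvnlt : 0 < v 1 - v n := by
    rcases lt_or_eq_of_le hvn1 with h | h
    · linarith
    · exact absurd h (Ne.symm hne)
  have hn0 : (0:ℝ) < (n:ℝ) := by positivity
  have hn2R : (2:ℝ) ≤ (n:ℝ) := by exact_mod_cast hn
  have hnsq : (0:ℝ) < (n:ℝ)^2 := by positivity
  have hnne : (n:ℝ) ≠ 0 := ne_of_gt hn0
  have hvg1 : vg n v (Ss n 1) = 0 := by
    rw [vg_Ss hv le_rfl (by omega), Aa_one]; ring
  have hvg_nonneg : ∀ s : ℕ, 1 ≤ s → s ≤ n → 0 ≤ vg n v (Ss n s) := by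
    intro s h1 h2
    rw [vg_Ss hv h1 h2]
    have hns : (0:ℝ) ≤ (n:ℝ) - s := by
      have : (s:ℝ) ≤ (n:ℝ) := by exact_mod_cast h2
      linarith
    exact mul_nonneg (div_nonneg hns hnsq.le) (Aa_nonneg hv h2)
  -- 2 ≤ sstar
  have hD2 : 0 ≤ Delta n v 2 := by
    have he : Delta n v 2 = vg n v (Ss n 2) - vg n v (Ss n 1) := by
      rw [Delta]
    rw [he, hvg1, sub_zero]
    exact hvg_nonneg 2 (by omega) hn
  have h2s : 2 ≤ sstar := hs4 2 le_rfl hn hD2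
  -- 2 ≤ tstar
  have hδ2 : 0 ≤ delta n v 2 := by
    have he : delta n v 2 = vg n v (Ss n 2) / ((2:ℕ):ℝ) - vg n v (Ss n 1) / (((2:ℕ):ℝ) - 1) := by
      rw [delta]
    rw [he, hvg1]
    norm_num
    exact div_nonneg (hvg_nonneg 2 (by omega) hn) (by norm_num)
  have h2t : 2 ≤ tstar := ht4 2 le_rfl hn hδ2
  -- tstar ≤ sstar
  have htR2 : (2:ℝ) ≤ (tstar:ℝ) := by exact_mod_cast h2t
  have htm1 : (0:ℝ) < (tstar:ℝ) - 1 := by linarith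
  have hts : tstar ≤ sstar := by
    apply hs4 tstar h2t ht2
    have hposA : 0 ≤ vg n v (Ss n (tstar-1)) := hvg_nonneg _ (by omega) (by omega)
    have h1 : vg n v (Ss n (tstar-1)) / ((tstar:ℝ)-1) ≤ vg n v (Ss n tstar) / tstar := by
      have h0 := ht3
      rw [delta] at h0
      linarith
    rw [div_le_div_iff₀ htm1 (by linarith)] at h1
    rw [Delta]
    nlinarith [h1, hposA, htm1]
  -- sstar ≤ n/2 + 1
  have hsle : sstar ≤ n / 2 + 1 := by
    by_contra hcon
    push_neg at hcon
    have h3s : 3 ≤ sstar := by omega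
    have h2ss : n + 3 ≤ 2 * sstar := by omega
    obtain ⟨d, hd_def⟩ : ∃ d, d = v 1 - v (n+2-sstar) := ⟨_, rfl⟩
    obtain ⟨a, ha_def⟩ : ∃ a, a = Aa n v (sstar - 1) := ⟨_, rfl⟩
    have hd : 0 ≤ d := by
      have := hv 1 (n+2-sstar) (by omega)
      rw [hd_def]; linarith
    have hage : v 1 - v n ≤ a := by
      rw [ha_def]; exact Aa_ge_vn hv h3s hs2
    have hlow : ((sstar:ℝ)-2)*d ≤ a := by
      rw [ha_def, hd_def]; exact Aa_lower hv (by omega) hs2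
    have hAs : Aa n v sstar = a + d := by
      rw [ha_def, hd_def]; exact Aa_succ v (by omega) hs2
    have hcast : ((sstar - 1 : ℕ):ℝ) = (sstar:ℝ) - 1 := by
      push_cast [Nat.cast_sub (show 1 ≤ sstar by omega)]; ring
    have hDeq : Delta n v sstar
        = (((n:ℝ)-sstar)*(a+d) - ((n:ℝ)-(sstar:ℝ)+1)*a)/(n:ℝ)^2 := by
      rw [Delta, vg_Ss hv (by omega) hs2, vg_Ss hv (by omega) (by omega), hAs, hcast,
        ← ha_def, div_mul_eq_mul_div, div_mul_eq_mul_div, div_sub_div_same]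
      congr 1
      ring
    have hN : ((n:ℝ)-sstar)*(a+d) - ((n:ℝ)-(sstar:ℝ)+1)*a < 0 := by
      have hrew : ((n:ℝ)-sstar)*(a+d) - ((n:ℝ)-(sstar:ℝ)+1)*a = ((n:ℝ)-sstar)*d - a := by
        ring
      rw [hrew]
      rcases hd.eq_or_lt with h | h
      · rw [← h, mul_zero]
        linarith
      · have hnsR : (n:ℝ) + 3 ≤ 2*(sstar:ℝ) := by exact_mod_cast h2ss
        have h1 : ((n:ℝ)-sstar) ≤ (sstar:ℝ) - 3 := by linarith
        have h2 := mul_le_mul_of_nonneg_right h1 hd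
        linarith
    have : Delta n v sstar < 0 := by
      rw [hDeq]
      exact div_neg_of_neg_of_pos hN hnsq
    linarith
  -- tstar ≤ ceil sqrt n
  have htceil : tstar ≤ ⌈Real.sqrt n⌉₊ := by
    by_contra hcon
    push_neg at hcon
    have hceil2 : 2 ≤ ⌈Real.sqrt n⌉₊ := by
      have h1 : (1:ℝ) < Real.sqrt n := by
        rw [show (1:ℝ) = Real.sqrt 1 by simp]
        apply Real.sqrt_lt_sqrt (by norm_num)
        exact_mod_cast hn
      have := Nat.lt_ceil.mpr (by exact_mod_cast h1 : ((1:ℕ):ℝ) < Real.sqrt n)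
      omega
    have h3t : 3 ≤ tstar := by omega
    have htR3 : (3:ℝ) ≤ (tstar:ℝ) := by exact_mod_cast h3t
    have hsqrt_le : Real.sqrt n ≤ (tstar:ℝ) - 1 := by
      have h1 := Nat.le_ceil (Real.sqrt n)
      have h2 : (⌈Real.sqrt n⌉₊ : ℝ) + 1 ≤ (tstar:ℝ) := by exact_mod_cast hcon
      linarith
    have hsq : (n:ℝ) ≤ ((tstar:ℝ)-1)^2 := by
      nlinarith [Real.sq_sqrt (show (0:ℝ) ≤ (n:ℝ) by positivity), Real.sqrt_nonneg (n:ℝ), hsqrt_le]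
    obtain ⟨d, hd_def⟩ : ∃ d, d = v 1 - v (n+2-tstar) := ⟨_, rfl⟩
    obtain ⟨a, ha_def⟩ : ∃ a, a = Aa n v (tstar - 1) := ⟨_, rfl⟩
    have hd : 0 ≤ d := by
      have := hv 1 (n+2-tstar) (by omega)
      rw [hd_def]; linarith
    have hage : v 1 - v n ≤ a := by
      rw [ha_def]; exact Aa_ge_vn hv h3t ht2
    have hlow : ((tstar:ℝ)-2)*d ≤ a := by
      rw [ha_def, hd_def]; exact Aa_lower hv (by omega) ht2
    have hAs : Aa n v tstar = a + d := by
      rw [ha_def, hd_def]; exact Aa_succ v (by omega) ht2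
    have hcast : ((tstar - 1 : ℕ):ℝ) = (tstar:ℝ) - 1 := by
      push_cast [Nat.cast_sub (show 1 ≤ tstar by omega)]; ring
    have hdelta1 : vg n v (Ss n tstar) = ((n:ℝ)-tstar)/(n:ℝ)^2 * (a+d) := by
      rw [vg_Ss hv (by omega) ht2, hAs]
    have hdelta2 : vg n v (Ss n (tstar-1)) = ((n:ℝ)-(tstar:ℝ)+1)/(n:ℝ)^2 * a := by
      rw [vg_Ss hv (by omega) (by omega), hcast, ← ha_def]
      ring
    have ht0 : (tstar:ℝ) ≠ 0 := by positivity
    have ht1 : (tstar:ℝ) - 1 ≠ 0 := ne_of_gt htm1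
    have hdeq : delta n v tstar
        = (((n:ℝ)-tstar)*(a+d)*((tstar:ℝ)-1) - ((n:ℝ)-(tstar:ℝ)+1)*a*tstar)
          / ((n:ℝ)^2 * tstar * ((tstar:ℝ)-1)) := by
      rw [delta, hdelta1, hdelta2]
      field_simp
    have hpos : (0:ℝ) < (n:ℝ)^2 * tstar * ((tstar:ℝ)-1) := by
      apply mul_pos (mul_pos hnsq (by linarith)) htm1
    have key : 0 ≤ ((n:ℝ)-tstar)*(a+d)*((tstar:ℝ)-1) - ((n:ℝ)-(tstar:ℝ)+1)*a*tstar := by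
      by_contra hX
      push_neg at hX
      have := div_neg_of_neg_of_pos hX hpos
      rw [← hdeq] at this
      linarith
    have key2 : (n:ℝ)*a ≤ ((tstar:ℝ)-1)*((n:ℝ)-tstar)*d := by
      linear_combination key
    rcases hd.eq_or_lt with h | h
    · rw [← h, mul_zero] at key2
      have hap : (0:ℝ) < a := by linarith
      nlinarith [mul_pos hn0 hap]
    · have hprod1 := mul_le_mul_of_nonneg_left hlow hn0.le
      have hprod2 := mul_le_mul_of_nonneg_right hsq h.le
      have hprod3 : 0 < ((tstar:ℝ)-1)*d := mul_pos htm1 h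
      nlinarith [key2, hprod1, hprod2, hprod3, htR3, h]
  exact ⟨h2s, hsle, h2t, hts, htceil⟩
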